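/- arXiv:1711.08172 — 7 statements merged into one kernel-verified Lean document; each statement's English description precedes it below -/
import Mathlib

section
/- Let F(x) = x²/2 + a·sin(bπ(x − 1/(2b))) + a for constants a > 0, b > 0. If R ≥ min{2√a, 2/b}, then the only point x̄ ∈ ℝ satisfying F(x̄) = min{F(x) : x ∈ [x̄ − R, x̄ + R]} is the global minimizer x* = 0. -/
lemma aux_half (a b R xbar : ℝ) (ha : 0 < a) (hb : 0 < b)
    (hR : min (2 * Real.sqrt a) (2 / b) ≤ R)
    (hmin : ∀ x ∈ Set.Icc (xbar - R) (xbar + R),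
      xbar ^ 2 / 2 + a * (1 - Real.cos (b * Real.pi * xbar)) ≤
      x ^ 2 / 2 + a * (1 - Real.cos (b * Real.pi * x))) :
    xbar ≤ R := by
  by_contra hx
  push_neg at hx
  have hsa : 0 < Real.sqrt a := Real.sqrt_pos.mpr ha
  have hR0 : 0 < R := lt_of_lt_of_le (lt_min (by positivity) (by positivity)) hR
  rcases min_le_iff.mp hR with h1 | h2
  · -- case 2 * sqrt a ≤ R
    have hx' := hmin (xbar - 2 * Real.sqrt a) ⟨by linarith, by linarith⟩
    have c1 : Real.cos (b * Real.pi * xbar) ≤ 1 := Real.cos_le_one _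
    have c2 : -1 ≤ Real.cos (b * Real.pi * (xbar - 2 * Real.sqrt a)) :=
      Real.neg_one_le_cos _
    have hsq : Real.sqrt a ^ 2 = a := Real.sq_sqrt ha.le
    have hgt : 2 * Real.sqrt a < xbar := lt_of_le_of_lt h1 hx
    nlinarith [mul_pos hsa (sub_pos.mpr hgt)]
  · -- case 2 / b ≤ R
    set t : ℝ := xbar * b / 2 with ht
    set k : ℤ := ⌈t⌉ - 1 with hk
    set x' : ℝ := 2 * (k : ℝ) / b with hx'def
    have hkt1 : (k : ℝ) < t := by
      have := Int.ceil_lt_add_one t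
      push_cast [hk]
      linarith
    have hkt2 : t - 1 ≤ (k : ℝ) := by
      have := Int.le_ceil t
      push_cast [hk]
      linarith
    have ht1 : 1 < t := by
      have : 2 / b < xbar := lt_of_le_of_lt h2 hx
      rw [ht]
      rw [div_lt_iff₀ hb] at this
      nlinarith
    have hk0 : 0 < (k : ℝ) := by linarith
    have hx'pos : 0 < x' := by positivity
    have hx'lt : x' < xbar := by
      rw [hx'def, div_lt_iff₀ hb]
      nlinarith
    have hx'ge : xbar - 2 / b ≤ x' := by
      rw [hx'def, le_div_iff₀ hb]
      have : (xbar - 2 / b) * b = xbar * b - 2 := by field_simp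
      rw [this]
      nlinarith
    have hx'mem : x' ∈ Set.Icc (xbar - R) (xbar + R) := ⟨by linarith, by linarith⟩
    have hcos : Real.cos (b * Real.pi * x') = 1 := by
      have harg : b * Real.pi * x' = (k : ℝ) * (2 * Real.pi) := by
        rw [hx'def]; field_simp
      rw [harg, Real.cos_int_mul_two_pi]
    have hx'' := hmin x' hx'mem
    rw [hcos] at hx''
    have c1 : Real.cos (b * Real.pi * xbar) ≤ 1 := Real.cos_le_one _
    nlinarith

theorem stmt_0 (a b : ℝ) (ha : 0 < a) (hb : 0 < b)
    (F : ℝ → ℝ)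
    (hF : ∀ x, F x = x ^ 2 / 2 + a * Real.sin (b * Real.pi * (x - 1 / (2 * b))) + a)
    (R : ℝ) (hR : min (2 * Real.sqrt a) (2 / b) ≤ R)
    (xbar : ℝ) (hmin : ∀ x ∈ Set.Icc (xbar - R) (xbar + R), F xbar ≤ F x) :
    xbar = 0 := by
  have hG : ∀ x, F x = x ^ 2 / 2 + a * (1 - Real.cos (b * Real.pi * x)) := by
    intro x
    rw [hF x]
    have harg : b * Real.pi * (x - 1 / (2 * b)) = b * Real.pi * x - Real.pi / 2 := by
      field_simp
    rw [harg, Real.sin_sub_pi_div_two]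
    ring
  have hmin1 : ∀ x ∈ Set.Icc (xbar - R) (xbar + R),
      xbar ^ 2 / 2 + a * (1 - Real.cos (b * Real.pi * xbar)) ≤
      x ^ 2 / 2 + a * (1 - Real.cos (b * Real.pi * x)) := by
    intro x hx
    have := hmin x hx
    rwa [hG, hG] at this
  have h1 : xbar ≤ R := aux_half a b R xbar ha hb hR hmin1
  have hmin2 : ∀ x ∈ Set.Icc (-xbar - R) (-xbar + R),
      (-xbar) ^ 2 / 2 + a * (1 - Real.cos (b * Real.pi * (-xbar))) ≤
      x ^ 2 / 2 + a * (1 - Real.cos (b * Real.pi * x)) := by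
    intro x hx
    have hxm : -x ∈ Set.Icc (xbar - R) (xbar + R) := by
      constructor <;> [linarith [hx.2]; linarith [hx.1]]
    have h := hmin1 (-x) hxm
    rw [show b * Real.pi * (-x) = -(b * Real.pi * x) by ring, Real.cos_neg] at h
    rw [show b * Real.pi * (-xbar) = -(b * Real.pi * xbar) by ring, Real.cos_neg]
    nlinarith [h]
  have h2 : -xbar ≤ R := aux_half a b R (-xbar) ha hb hR hmin2
  have h0mem : (0 : ℝ) ∈ Set.Icc (xbar - R) (xbar + R) := ⟨by linarith, by linarith⟩
  have hF0 : F 0 = 0 := by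
    rw [hG]; simp
  have hlow : xbar ^ 2 / 2 ≤ F xbar := by
    rw [hG]
    have : Real.cos (b * Real.pi * xbar) ≤ 1 := Real.cos_le_one _
    nlinarith
  have := hmin 0 h0mem
  rw [hF0] at this
  nlinarith [sq_nonneg xbar]
end

section
/- Let f : ℝⁿ → ℝ be differentiable and satisfy the PL inequality with constant μ > 0, with quadratic growth f(x) − f* ≥ (μ/2)·d(x, χ_f*)² and ‖∇f(x)‖ ≥ μ·d(x, χ_f*) where χ_f* is the (nonempty) set of global minimizers of f, and assume diam(χ_f*) ≤ M. Let r satisfy |r(x) − r(y)| ≤ α‖x − y‖ + 2β. Set F = f + r with global minimizer x*. If x̄ satisfies ‖∇f(x̄)‖ ≤ δ and also ‖∇f(x*)‖ ≤ δ, then d(x̄, x*) ≤ 2δ/μ + M and F(x̄) − F(x*) ≤ (δ² + 2αδ)/μ + αM + 2β. -/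
theorem stmt_3 (n : ℕ) (f r : EuclideanSpace ℝ (Fin n) → ℝ)
    (μ α β δ M : ℝ) (hμ : 0 < μ) (hα : 0 ≤ α) (hβ : 0 ≤ β) (hM : 0 ≤ M)
    (hf : Differentiable ℝ f)
    (χf : Set (EuclideanSpace ℝ (Fin n))) (hχf : χf = {x | ∀ y, f x ≤ f y})
    (hne : χf.Nonempty)
    (fstar : ℝ) (hfstar : ∀ x ∈ χf, f x = fstar)
    (hPL : ∀ x, μ * (f x - fstar) ≤ (1 / 2) * ‖gradient f x‖ ^ 2)
    (hQG : ∀ x, μ / 2 * (Metric.infDist x χf) ^ 2 ≤ f x - fstar)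
    (hgrad : ∀ x, μ * Metric.infDist x χf ≤ ‖gradient f x‖)
    (hdiam : ∀ x ∈ χf, ∀ y ∈ χf, dist x y ≤ M)
    (hr : ∀ x y, |r x - r y| ≤ α * ‖x - y‖ + 2 * β)
    (F : EuclideanSpace ℝ (Fin n) → ℝ) (hF : ∀ x, F x = f x + r x)
    (xstar : EuclideanSpace ℝ (Fin n)) (hxstar : ∀ y, F xstar ≤ F y)
    (xbar : EuclideanSpace ℝ (Fin n))
    (hxbar : ‖gradient f xbar‖ ≤ δ) (hxstarg : ‖gradient f xstar‖ ≤ δ) :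
    dist xbar xstar ≤ 2 * δ / μ + M ∧
      F xbar - F xstar ≤ (δ ^ 2 + 2 * α * δ) / μ + α * M + 2 * β := by
  have hδ : 0 ≤ δ := le_trans (norm_nonneg _) hxbar
  -- infDist bounds
  have hinf1 : Metric.infDist xbar χf ≤ δ / μ := by
    rw [le_div_iff₀' hμ]; exact le_trans (hgrad xbar) hxbar
  have hinf2 : Metric.infDist xstar χf ≤ δ / μ := by
    rw [le_div_iff₀' hμ]; exact le_trans (hgrad xstar) hxstarg
  have hdist : dist xbar xstar ≤ 2 * δ / μ + M := by
    refine le_of_forall_pos_le_add fun ε hε => ?_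
    obtain ⟨p, hp, hp2⟩ := (Metric.infDist_lt_iff hne).mp
      (lt_of_le_of_lt hinf1 (lt_add_of_pos_right _ (half_pos hε)))
    obtain ⟨q, hq, hq2⟩ := (Metric.infDist_lt_iff hne).mp
      (lt_of_le_of_lt hinf2 (lt_add_of_pos_right _ (half_pos hε)))
    have := hdiam p hp q hq
    have h1 : dist xbar xstar ≤ dist xbar p + dist p q + dist q xstar :=
      dist_triangle4 _ _ _ _
    have h2 : dist q xstar = dist xstar q := dist_comm _ _
    have h3 : 2 * δ / μ = δ / μ + δ / μ := by ring
    linarith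
  refine ⟨hdist, ?_⟩
  -- f xbar - fstar ≤ δ²/(2μ)
  have h1 : f xbar - fstar ≤ δ ^ 2 / (2 * μ) := by
    rw [le_div_iff₀ (by positivity)]
    have := hPL xbar
    nlinarith [sq_nonneg ‖gradient f xbar‖, norm_nonneg (gradient f xbar),
      sq_le_sq' (by linarith [norm_nonneg (gradient f xbar)]) hxbar]
  -- fstar ≤ f xstar
  have h2 : fstar ≤ f xstar := by
    obtain ⟨p, hp⟩ := hne
    have hp' := hp
    rw [hχf] at hp'
    have h := hp' xstar
    rw [hfstar p hp] at h
    exact h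
  have h3 : r xbar - r xstar ≤ α * dist xbar xstar + 2 * β := by
    have := hr xbar xstar
    rw [← dist_eq_norm] at this
    exact le_trans (le_abs_self _) this
  have h4 : α * dist xbar xstar ≤ α * (2 * δ / μ + M) :=
    mul_le_mul_of_nonneg_left hdist hα
  have h5 : δ ^ 2 / (2 * μ) ≤ δ ^ 2 / μ := by
    apply div_le_div_of_nonneg_left (by positivity) hμ; linarith
  rw [hF xbar, hF xstar]
  have : (δ ^ 2 + 2 * α * δ) / μ = δ ^ 2 / μ + α * (2 * δ / μ) := by
    field_simp
  rw [this]
  nlinarith [mul_le_mul_of_nonneg_left hdist hα]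
end

section
/- Suppose f : ℝⁿ → ℝ is differentiable with L-Lipschitz gradient, r satisfies |r(x) − r(y)| ≤ α‖x − y‖ + 2β, and F = f + r. If x̄ is an R-local minimizer of F (i.e., F(x̄) ≤ F(x) for all x ∈ B(x̄, R)) with R > 0, then ‖∇f(x̄)‖ ≤ α + max{4β/R, 2√(βL)}. -/
open InnerProductSpace

lemma descent {n : ℕ} (f : EuclideanSpace ℝ (Fin n) → ℝ) (L : ℝ)
    (hf : Differentiable ℝ f)
    (hLip : ∀ x y, ‖gradient f x - gradient f y‖ ≤ L * ‖x - y‖)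
    (x y : EuclideanSpace ℝ (Fin n)) :
    f y ≤ f x + ⟪gradient f x, y - x⟫_ℝ + L / 2 * ‖y - x‖ ^ 2 := by
  set v := y - x with hv
  set φ : ℝ → ℝ := fun t => f (x + t • v) - t * ⟪gradient f x, v⟫_ℝ - L / 2 * t ^ 2 * ‖v‖ ^ 2
    with hφ
  have hderiv : ∀ t : ℝ, HasDerivAt φ
      (⟪gradient f (x + t • v), v⟫_ℝ - ⟪gradient f x, v⟫_ℝ - L * t * ‖v‖ ^ 2) t := by
    intro t
    have hline : HasDerivAt (fun t : ℝ => x + t • v) v t := by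
      simpa using ((hasDerivAt_id t).smul_const v).const_add x
    have hfd : HasFDerivAt f (toDual ℝ _ (gradient f (x + t • v))) (x + t • v) := by
      rw [← hasGradientAt_iff_hasFDerivAt]
      exact (hf _).hasGradientAt
    have h1 : HasDerivAt (fun t : ℝ => f (x + t • v)) (⟪gradient f (x + t • v), v⟫_ℝ) t := by
      simpa [InnerProductSpace.toDual_apply_apply, Function.comp_def] using hfd.comp_hasDerivAt t hline
    have h2 : HasDerivAt (fun t : ℝ => t * ⟪gradient f x, v⟫_ℝ) (⟪gradient f x, v⟫_ℝ) t := by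
      simpa using (hasDerivAt_id t).mul_const (⟪gradient f x, v⟫_ℝ)
    have h3 : HasDerivAt (fun t : ℝ => L / 2 * t ^ 2 * ‖v‖ ^ 2) (L * t * ‖v‖ ^ 2) t := by
      have := ((hasDerivAt_pow 2 t).const_mul (L / 2)).mul_const (‖v‖ ^ 2)
      refine this.congr_deriv ?_
      rw [show (2:ℕ) - 1 = 1 from rfl, pow_one, Nat.cast_ofNat]
      ring
    exact (h1.sub h2).sub h3
  have hanti : AntitoneOn φ (Set.Icc (0 : ℝ) 1) := by
    apply antitoneOn_of_deriv_nonpos (convex_Icc 0 1)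
    · exact fun t _ => (hderiv t).differentiableAt.continuousAt.continuousWithinAt
    · exact fun t ht => (hderiv t).differentiableAt.differentiableWithinAt
    · intro t ht
      rw [(hderiv t).deriv]
      have h1 : ⟪gradient f (x + t • v), v⟫_ℝ - ⟪gradient f x, v⟫_ℝ
          = ⟪gradient f (x + t • v) - gradient f x, v⟫_ℝ := by
        rw [inner_sub_left]
      have ht0 : 0 ≤ t := (Set.mem_Icc.mp (interior_subset ht)).1
      have h2 : ⟪gradient f (x + t • v) - gradient f x, v⟫_ℝ ≤ L * t * ‖v‖ ^ 2 := by
        calc ⟪gradient f (x + t • v) - gradient f x, v⟫_ℝ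
            ≤ ‖gradient f (x + t • v) - gradient f x‖ * ‖v‖ := real_inner_le_norm _ _
          _ ≤ L * ‖(x + t • v) - x‖ * ‖v‖ :=
              mul_le_mul_of_nonneg_right (hLip _ _) (norm_nonneg _)
          _ = L * (t * ‖v‖) * ‖v‖ := by
              rw [show x + t • v - x = t • v by abel, norm_smul, Real.norm_of_nonneg ht0]
          _ = L * t * ‖v‖ ^ 2 := by ring
      linarith [h1 ▸ h2]
  have := hanti (Set.left_mem_Icc.mpr zero_le_one) (Set.right_mem_Icc.mpr zero_le_one) zero_le_one
  simp only [hφ] at this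
  simp only [zero_smul, add_zero, one_smul, one_mul, one_pow] at this
  have hy : x + v = y := by rw [hv]; abel
  rw [hy] at this
  linarith

theorem stmt_4 (n : ℕ) (f r : EuclideanSpace ℝ (Fin n) → ℝ)
    (L α β R : ℝ) (hL : 0 ≤ L) (hα : 0 ≤ α) (hβ : 0 ≤ β) (hR : 0 < R)
    (hf : Differentiable ℝ f)
    (hLip : ∀ x y, ‖gradient f x - gradient f y‖ ≤ L * ‖x - y‖)
    (hr : ∀ x y, |r x - r y| ≤ α * ‖x - y‖ + 2 * β)
    (F : EuclideanSpace ℝ (Fin n) → ℝ) (hF : ∀ x, F x = f x + r x)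
    (xbar : EuclideanSpace ℝ (Fin n))
    (hmin : ∀ x ∈ Metric.closedBall xbar R, F xbar ≤ F x) :
    ‖gradient f xbar‖ ≤ α + max (4 * β / R) (2 * Real.sqrt (β * L)) := by
  set g := gradient f xbar with hg
  set G := ‖g‖ with hG
  set M := max (4 * β / R) (2 * Real.sqrt (β * L)) with hM
  have hM0 : 0 ≤ M := le_max_of_le_right (by positivity)
  by_contra hcon
  push_neg at hcon
  have hGpos : 0 < G := lt_of_le_of_lt (by positivity) hcon
  set D := G - α with hD
  have hDM : M < D := by simp only [hD]; linarith
  -- key inequality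
  have key : ∀ s : ℝ, 0 ≤ s → s ≤ R → s * D ≤ L / 2 * s ^ 2 + 2 * β := by
    intro s hs0 hsR
    set y := xbar - (s / G) • g with hy
    have hnorm : ‖y - xbar‖ = s := by
      rw [hy, sub_sub_cancel_left, norm_neg, norm_smul, Real.norm_of_nonneg (by positivity)]
      field_simp
      rfl
    have hball : y ∈ Metric.closedBall xbar R := by
      rw [Metric.mem_closedBall, dist_eq_norm, hnorm]; exact hsR
    have hFy := hmin y hball
    have hfy := descent f L hf hLip xbar y
    have hinner : ⟪g, y - xbar⟫_ℝ = -(s * G) := by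
      rw [hy, sub_sub_cancel_left, inner_neg_right, real_inner_smul_right,
        real_inner_self_eq_norm_sq, ← hG]
      field_simp
    have hry : r y - r xbar ≤ α * s + 2 * β := by
      have := hr y xbar
      rw [hnorm] at this
      exact le_trans (le_abs_self _) this
    rw [hF y, hF xbar] at hFy
    rw [hinner, hnorm] at hfy
    nlinarith
  -- case split
  rcases le_or_gt D (L * R) with hcase | hcase
  · -- L > 0 and s = D / L
    have hLpos : 0 < L := by
      rcases hL.eq_or_lt with h | h
      · exfalso; rw [← h] at hcase; simp at hcase
        have : 0 < D := lt_of_le_of_lt hM0 hDM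
        linarith
      · exact h
    have hDpos : 0 < D := lt_of_le_of_lt hM0 hDM
    have hs0 : 0 ≤ D / L := by positivity
    have hsR : D / L ≤ R := by
      rw [div_le_iff₀ hLpos]; linarith [hcase]
    have := key (D / L) hs0 hsR
    have hD2 : D ^ 2 ≤ 4 * (β * L) := by
      have h1 : D / L * D = D ^ 2 / L := by ring
      have h2 : L / 2 * (D / L) ^ 2 = D ^ 2 / (2 * L) := by
        field_simp
      have h3 : D ^ 2 / (2 * L) * L = D ^ 2 / 2 := by field_simp
      rw [h1, h2, div_le_iff₀ hLpos, add_mul, h3] at this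
      nlinarith
    have : D ≤ 2 * Real.sqrt (β * L) := by
      calc D = Real.sqrt (D ^ 2) := (Real.sqrt_sq hDpos.le).symm
        _ ≤ Real.sqrt (4 * (β * L)) := Real.sqrt_le_sqrt hD2
        _ = 2 * Real.sqrt (β * L) := by
            rw [show (4 : ℝ) * (β * L) = 2 ^ 2 * (β * L) by norm_num,
              Real.sqrt_mul (by positivity), Real.sqrt_sq (by norm_num)]
    exact absurd (lt_of_lt_of_le hDM (le_trans this (le_max_right _ _))) (lt_irrefl _)
  · -- s = R
    have := key R (le_of_lt hR) le_rfl
    have hD4 : D ≤ 4 * β / R := by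
      rw [le_div_iff₀ hR]
      nlinarith [this, hcase]
    exact absurd (lt_of_lt_of_le hDM (le_trans hD4 (le_max_left _ _))) (lt_irrefl _)
end

section
/- Let F(x₁,…,x_s) = f(x) + r(x) where ∇f is L-Lipschitz and |r(x) − r(y)| ≤ α‖x − y‖ + 2β. If x̄ is a blockwise R-local minimizer, i.e., for each block i, F(x̄_i, x̄_{−i}) ≤ F(x_i, x̄_{−i}) for all x_i ∈ B(x̄_i, R_i), then ‖∇f(x̄)‖ ≤ ‖v‖ where v_i = α + max{4β/R_i, 2√(βL)}. -/
open InnerProductSpace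

lemma my_hasDerivAt_line {E : Type*} [NormedAddCommGroup E] [InnerProductSpace ℝ E]
    [CompleteSpace E] (f : E → ℝ) (hf : Differentiable ℝ f) (x d : E) (t : ℝ) :
    HasDerivAt (fun t : ℝ => f (x + t • d)) (inner ℝ (gradient f (x + t • d)) d) t := by
  have hc : HasDerivAt (fun t : ℝ => x + t • d) d t := by
    simpa using ((hasDerivAt_id t).smul_const d).const_add x
  have hg := (hf (x + t • d)).hasGradientAt
  rw [hasGradientAt_iff_hasFDerivAt] at hg
  have := hg.comp_hasDerivAt t hc
  exact this.congr_deriv (by simp)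

lemma my_descent {E : Type*} [NormedAddCommGroup E] [InnerProductSpace ℝ E]
    [CompleteSpace E] (f : E → ℝ) (L : ℝ) (hf : Differentiable ℝ f)
    (hLip : ∀ x y, ‖gradient f x - gradient f y‖ ≤ L * ‖x - y‖) (x d : E) :
    f (x + d) ≤ f x + inner ℝ (gradient f x) d + L / 2 * ‖d‖ ^ 2 := by
  set φ : ℝ → ℝ := fun t => L / 2 * t ^ 2 * ‖d‖ ^ 2 + t * inner ℝ (gradient f x) d + f x
      - f (x + t • d) with hφ
  have hder : ∀ t : ℝ, HasDerivAt φ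
      (L * t * ‖d‖ ^ 2 + inner ℝ (gradient f x) d - inner ℝ (gradient f (x + t • d)) d) t := by
    intro t
    have h1 : HasDerivAt (fun t : ℝ => L / 2 * t ^ 2 * ‖d‖ ^ 2 + t * inner ℝ (gradient f x) d + f x)
        (L * t * ‖d‖ ^ 2 + inner ℝ (gradient f x) d) t := by
      have : HasDerivAt (fun t : ℝ => L / 2 * t ^ 2 * ‖d‖ ^ 2)
          (L * t * ‖d‖ ^ 2) t := by
        have := ((hasDerivAt_pow 2 t).const_mul (L / 2)).mul_const (‖d‖ ^ 2)
        exact this.congr_deriv (by rw [show (2:ℕ) - 1 = 1 from rfl]; push_cast; ring)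
      simpa using (this.add ((hasDerivAt_id t).mul_const _)).add_const (f x)
    exact h1.sub (my_hasDerivAt_line f hf x d t)
  have hmono : MonotoneOn φ (Set.Icc 0 1) := by
    apply monotoneOn_of_deriv_nonneg (convex_Icc 0 1)
    · exact (Differentiable.continuous (fun t => (hder t).differentiableAt)).continuousOn
    · intro t ht
      exact (hder t).differentiableAt.differentiableWithinAt
    · intro t ht
      rw [(hder t).deriv]
      have ht0 : 0 < t := (Set.mem_Ioo.mp (by simpa using ht)).1
      have key : inner ℝ (gradient f x) d - inner ℝ (gradient f (x + t • d)) d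
          ≥ -(L * t * ‖d‖ ^ 2) := by
        have h2 : ⟪gradient f x - gradient f (x + t • d), d⟫_ℝ ≥
            -(‖gradient f x - gradient f (x + t • d)‖ * ‖d‖) := by
          linarith [abs_real_inner_le_norm (gradient f x - gradient f (x + t • d)) d,
            neg_abs_le (⟪gradient f x - gradient f (x + t • d), d⟫_ℝ)]
        have h3 : ‖gradient f x - gradient f (x + t • d)‖ ≤ L * (t * ‖d‖) := by
          have := hLip x (x + t • d)
          simpa [norm_smul, abs_of_pos ht0, mul_assoc] using this
        have h4 : ‖gradient f x - gradient f (x + t • d)‖ * ‖d‖ ≤ L * t * ‖d‖ ^ 2 := by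
          have := mul_le_mul_of_nonneg_right h3 (norm_nonneg d)
          nlinarith [norm_nonneg d]
        rw [inner_sub_left] at h2
        linarith
      linarith
  have h01 : φ 0 ≤ φ 1 := hmono (by norm_num) (by norm_num) (by norm_num)
  simp only [hφ] at h01
  norm_num at h01
  have hgd : ⟪gradient f x, d⟫_ℝ = fderiv ℝ f x d := by simp
  linarith


def blockVec {s : ℕ} {n : Fin s → ℕ} (i : Fin s) (w : EuclideanSpace ℝ (Fin (n i))) :
    PiLp 2 (fun i : Fin s => EuclideanSpace ℝ (Fin (n i))) :=
  WithLp.toLp 2 (Function.update 0 i w)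

lemma blockVec_apply {s : ℕ} {n : Fin s → ℕ} (i j : Fin s) (w : EuclideanSpace ℝ (Fin (n i))) :
    blockVec i w j = if h : j = i then h ▸ w else 0 := by
  unfold blockVec
  by_cases h : j = i
  · subst h; simp
  · simp [Function.update_of_ne h, h]

lemma my_update_norm {s : ℕ} {n : Fin s → ℕ} (i : Fin s) (w : EuclideanSpace ℝ (Fin (n i))) :
    ‖blockVec i w‖ = ‖w‖ := by
  have h := PiLp.norm_sq_eq_of_L2 (fun i : Fin s => EuclideanSpace ℝ (Fin (n i))) (blockVec i w)
  have hsum : ∑ j : Fin s, ‖blockVec i w j‖ ^ 2 = ‖w‖ ^ 2 := by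
    rw [Fintype.sum_eq_single i]
    · rw [blockVec_apply]; simp
    · intro j hj
      rw [blockVec_apply]; simp [hj]
  rw [hsum] at h
  have := (sq_eq_sq_iff_abs_eq_abs _ _).mp h
  rw [abs_of_nonneg (norm_nonneg _), abs_of_nonneg (norm_nonneg _)] at this
  exact this

lemma my_update_inner {s : ℕ} {n : Fin s → ℕ}
    (g : PiLp 2 (fun i : Fin s => EuclideanSpace ℝ (Fin (n i))))
    (i : Fin s) (w : EuclideanSpace ℝ (Fin (n i))) :
    ⟪g, blockVec i w⟫_ℝ = ⟪g i, w⟫_ℝ := by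
  rw [PiLp.inner_apply]
  rw [Fintype.sum_eq_single i]
  · rw [blockVec_apply]; simp
  · intro j hj
    rw [blockVec_apply]; simp [hj]

theorem stmt_10 (s : ℕ) (n : Fin s → ℕ)
    (f r : PiLp 2 (fun i : Fin s => EuclideanSpace ℝ (Fin (n i))) → ℝ)
    (L α β : ℝ) (hL : 0 ≤ L) (hα : 0 ≤ α) (hβ : 0 ≤ β)
    (R : Fin s → ℝ) (hR : ∀ i, 0 < R i)
    (hf : Differentiable ℝ f)
    (hLip : ∀ x y, ‖gradient f x - gradient f y‖ ≤ L * ‖x - y‖)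
    (hr : ∀ x y, |r x - r y| ≤ α * ‖x - y‖ + 2 * β)
    (F : PiLp 2 (fun i : Fin s => EuclideanSpace ℝ (Fin (n i))) → ℝ)
    (hF : ∀ x, F x = f x + r x)
    (xbar : PiLp 2 (fun i : Fin s => EuclideanSpace ℝ (Fin (n i))))
    (hmin : ∀ i : Fin s, ∀ xi ∈ Metric.closedBall (xbar i) (R i),
      F xbar ≤ F (WithLp.toLp 2 (Function.update xbar i xi))) :
    ‖gradient f xbar‖ ≤
      Real.sqrt (∑ i : Fin s, (α + max (4 * β / R i) (2 * Real.sqrt (β * L))) ^ 2) := by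
  set g := gradient f xbar with hg
  -- Step 1: basic inequality for each block and radius t
  have step1 : ∀ i : Fin s, ∀ t : ℝ, 0 < t → t ≤ R i →
      t * ‖g i‖ ≤ α * t + 2 * β + L / 2 * t ^ 2 := by
    intro i t ht htR
    by_cases hgi : g i = 0
    · rw [hgi]
      simp only [norm_zero, mul_zero]
      positivity
    · have hgn : 0 < ‖g i‖ := norm_pos_iff.mpr hgi
      set w : EuclideanSpace ℝ (Fin (n i)) := (-(t / ‖g i‖)) • (g i) with hw
      have hnw : ‖w‖ = t := by
        rw [hw, norm_smul, norm_neg, Real.norm_eq_abs, abs_of_pos (div_pos ht hgn)]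
        field_simp
      set d := blockVec i w with hd
      have hdnorm : ‖d‖ = t := by rw [hd, my_update_norm, hnw]
      have hupd : WithLp.toLp 2 (Function.update xbar.ofLp i (xbar i + w)) = xbar + d := by
        ext1 j
        by_cases hj : j = i
        · subst hj
          show _ = xbar j + d j
          rw [hd, blockVec_apply]
          simp
        · show Function.update xbar.ofLp i (xbar i + w) j = xbar j + d j
          rw [Function.update_of_ne hj, hd, blockVec_apply]
          simp [hj]
      have hball : xbar i + w ∈ Metric.closedBall (xbar i) (R i) := by
        rw [Metric.mem_closedBall, dist_eq_norm]
        simpa [hnw] using htR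
      have hFle := hmin i _ hball
      rw [hupd, hF, hF] at hFle
      have hdesc := my_descent f L hf hLip xbar d
      have hinner : ⟪g, d⟫_ℝ = -(t * ‖g i‖) := by
        rw [hd, my_update_inner, hw, real_inner_smul_right, real_inner_self_eq_norm_sq]
        field_simp
      have hrr : r (xbar + d) - r xbar ≤ α * t + 2 * β := by
        have h := hr (xbar + d) xbar
        have hnd : ‖(xbar + d) - xbar‖ = t := by
          rw [add_sub_cancel_left, hdnorm]
        rw [hnd] at h
        exact le_trans (le_abs_self _) h
      rw [hinner, hdnorm] at hdesc
      linarith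
  -- Step 2: per-block gradient bound
  have step2 : ∀ i : Fin s,
      ‖g i‖ ≤ α + max (4 * β / R i) (2 * Real.sqrt (β * L)) := by
    intro i
    have key : ∀ t : ℝ, 0 < t → t ≤ R i → ‖g i‖ ≤ α + 2 * β / t + L / 2 * t := by
      intro t ht htR
      have h1 := step1 i t ht htR
      have h2 : ‖g i‖ * t ≤ (α + 2 * β / t + L / 2 * t) * t := by
        have : (α + 2 * β / t + L / 2 * t) * t = α * t + 2 * β + L / 2 * t ^ 2 := by
          field_simp
        rw [this]
        linarith [mul_comm t ‖g i‖]
      exact le_of_mul_le_mul_right h2 ht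
    have hmax1 : 4 * β / R i ≤ max (4 * β / R i) (2 * Real.sqrt (β * L)) := le_max_left _ _
    have hmax2 : 2 * Real.sqrt (β * L) ≤ max (4 * β / R i) (2 * Real.sqrt (β * L)) :=
      le_max_right _ _
    rcases eq_or_lt_of_le hL with hL0 | hLpos
    · -- L = 0
      have h := key (R i) (hR i) le_rfl
      have h2 : 2 * β / R i ≤ 4 * β / R i := by
        rw [div_le_div_iff₀ (hR i) (hR i)]
        nlinarith [hR i]
      rw [← hL0] at h
      calc ‖g i‖ ≤ α + 2 * β / R i + 0 / 2 * R i := h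
        _ = α + 2 * β / R i := by ring
        _ ≤ α + 4 * β / R i := by linarith
        _ ≤ _ := by linarith
    · rcases eq_or_lt_of_le hβ with hβ0 | hβpos
      · -- β = 0
        have hα2 : ‖g i‖ ≤ α := by
          apply le_of_forall_pos_le_add
          intro ε hε
          have ht : 0 < min (R i) (2 * ε / L) := lt_min (hR i) (by positivity)
          have hk := key _ ht (min_le_left _ _)
          have h3 : L / 2 * min (R i) (2 * ε / L) ≤ ε := by
            have h4 := min_le_right (R i) (2 * ε / L)
            have h5 : L / 2 * min (R i) (2 * ε / L) ≤ L / 2 * (2 * ε / L) :=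
              mul_le_mul_of_nonneg_left h4 (by linarith)
            have h6 : L / 2 * (2 * ε / L) = ε := by field_simp
            linarith
          have h7 : 2 * β / min (R i) (2 * ε / L) = 0 := by rw [← hβ0]; simp
          linarith
        have hnn : 0 ≤ max (4 * β / R i) (2 * Real.sqrt (β * L)) :=
          le_trans (div_nonneg (by linarith) (le_of_lt (hR i))) hmax1
        linarith
      · -- β > 0, L > 0
        set a := Real.sqrt β with ha
        set b := Real.sqrt L with hb
        have ha2 : a ^ 2 = β := Real.sq_sqrt hβ
        have hb2 : b ^ 2 = L := Real.sq_sqrt hL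
        have ha0 : 0 < a := Real.sqrt_pos.mpr hβpos
        have hb0 : 0 < b := Real.sqrt_pos.mpr hLpos
        have hab : Real.sqrt (β * L) = a * b := Real.sqrt_mul hβ L
        by_cases hcase : 2 * a / b ≤ R i
        · have ht : 0 < 2 * a / b := by positivity
          have hk := key _ ht hcase
          have heq : 2 * β / (2 * a / b) + L / 2 * (2 * a / b) = 2 * (a * b) := by
            rw [← ha2, ← hb2]
            field_simp
            ring
          calc ‖g i‖ ≤ α + (2 * β / (2 * a / b) + L / 2 * (2 * a / b)) := by linarith
            _ = α + 2 * (a * b) := by rw [heq]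
            _ = α + 2 * Real.sqrt (β * L) := by rw [hab]
            _ ≤ _ := by linarith
        · push_neg at hcase
          have hk := key (R i) (hR i) le_rfl
          have hRb : R i * b < 2 * a := (lt_div_iff₀ hb0).mp hcase
          have h5 : L / 2 * R i ≤ 2 * β / R i := by
            rw [le_div_iff₀ (hR i), ← ha2, ← hb2]
            have h8 : R i * b * (R i * b) < (2 * a) * (2 * a) :=
              mul_lt_mul'' hRb hRb (le_of_lt (mul_pos (hR i) hb0)) (le_of_lt (mul_pos (hR i) hb0))
            nlinarith [h8]
          calc ‖g i‖ ≤ α + 2 * β / R i + 2 * β / R i := by linarith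
            _ = α + 4 * β / R i := by ring
            _ ≤ _ := by linarith
  -- Step 3: combine
  have hnormsq : ‖g‖ ^ 2 = ∑ i : Fin s, ‖g i‖ ^ 2 :=
    PiLp.norm_sq_eq_of_L2 _ g
  have hsum : ∑ i : Fin s, ‖g i‖ ^ 2
      ≤ ∑ i : Fin s, (α + max (4 * β / R i) (2 * Real.sqrt (β * L))) ^ 2 := by
    apply Finset.sum_le_sum
    intro i _
    exact pow_le_pow_left₀ (norm_nonneg _) (step2 i) 2
  calc ‖g‖ = Real.sqrt (‖g‖ ^ 2) := (Real.sqrt_sq (norm_nonneg g)).symm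
    _ = Real.sqrt (∑ i : Fin s, ‖g i‖ ^ 2) := by rw [hnormsq]
    _ ≤ _ := Real.sqrt_le_sqrt hsum
end

section
/- Under the blockwise setting plus the PL inequality with constant μ and diam(χ_f*) ≤ M, a blockwise R-local minimizer x̄ of F = f + r satisfies d(x̄, χ*) ≤ (2√s/μ)(α + max{4β/(min_i R_i), 2√(βL)}) + M, where χ* is the set of global minimizers of F. -/
open InnerProductSpace

theorem stmt12_descent {E : Type*} [NormedAddCommGroup E] [InnerProductSpace ℝ E]
    [CompleteSpace E]
    (f : E → ℝ) (hf : Differentiable ℝ f) (L : ℝ)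
    (hLip : ∀ x y, ‖gradient f x - gradient f y‖ ≤ L * ‖x - y‖)
    (x d : E) : f (x + d) ≤ f x + ⟪gradient f x, d⟫_ℝ + L / 2 * ‖d‖ ^ 2 := by
  set g : ℝ → ℝ := fun t => f (x + t • d) with hg
  have hderiv : ∀ t : ℝ, HasDerivAt g ⟪gradient f (x + t • d), d⟫_ℝ t := by
    intro t
    have h1 : HasDerivAt (fun t : ℝ => x + t • d) d t := by
      simpa using ((hasDerivAt_id t).smul_const d).const_add x
    have h2 := ((hf (x + t • d)).hasGradientAt.hasFDerivAt).comp_hasDerivAt t h1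
    simpa [InnerProductSpace.toDual_apply_apply, hg, Function.comp_def] using h2
  have hcontgrad : Continuous fun t : ℝ => gradient f (x + t • d) := by
    have : LipschitzWith (Real.toNNReal L) (gradient f) := by
      apply LipschitzWith.of_dist_le_mul
      intro a b
      rw [dist_eq_norm, dist_eq_norm]
      exact le_trans (hLip a b) (by
        gcongr
        exact Real.le_coe_toNNReal L)
    exact this.continuous.comp (by continuity)
  have hcont : Continuous fun t : ℝ => ⟪gradient f (x + t • d), d⟫_ℝ :=
    hcontgrad.inner continuous_const
  have hint : ∫ t in (0:ℝ)..1, ⟪gradient f (x + t • d), d⟫_ℝ = g 1 - g 0 :=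
    intervalIntegral.integral_eq_sub_of_hasDerivAt (fun t _ => hderiv t)
      (hcont.intervalIntegrable 0 1)
  have hbound : ∀ t ∈ Set.Icc (0:ℝ) 1,
      ⟪gradient f (x + t • d), d⟫_ℝ ≤ ⟪gradient f x, d⟫_ℝ + L * t * ‖d‖ ^ 2 := by
    intro t ht
    have h1 : ⟪gradient f (x + t • d) - gradient f x, d⟫_ℝ ≤ L * t * ‖d‖ ^ 2 := by
      calc ⟪gradient f (x + t • d) - gradient f x, d⟫_ℝ
          ≤ ‖gradient f (x + t • d) - gradient f x‖ * ‖d‖ := real_inner_le_norm _ _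
        _ ≤ (L * ‖(x + t • d) - x‖) * ‖d‖ := by gcongr; exact hLip _ _
        _ = L * t * ‖d‖ ^ 2 := by
            rw [add_sub_cancel_left, norm_smul, Real.norm_eq_abs, abs_of_nonneg ht.1]; ring
    have := inner_sub_left (𝕜 := ℝ) (gradient f (x + t • d)) (gradient f x) d
    linarith [h1, this.symm.le, this.le]
  have hintle : ∫ t in (0:ℝ)..1, ⟪gradient f (x + t • d), d⟫_ℝ
      ≤ ∫ t in (0:ℝ)..1, (⟪gradient f x, d⟫_ℝ + L * t * ‖d‖ ^ 2) := by
    apply intervalIntegral.integral_mono_on (by norm_num) (hcont.intervalIntegrable 0 1)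
      (by apply Continuous.intervalIntegrable; continuity) hbound
  have hrhs : ∫ t in (0:ℝ)..1, (⟪gradient f x, d⟫_ℝ + L * t * ‖d‖ ^ 2)
      = ⟪gradient f x, d⟫_ℝ + L / 2 * ‖d‖ ^ 2 := by
    rw [intervalIntegral.integral_add (by apply Continuous.intervalIntegrable; continuity)
      (by apply Continuous.intervalIntegrable; continuity)]
    have h2 : ∫ t in (0:ℝ)..1, L * t * ‖d‖ ^ 2 = L * ‖d‖^2 * ∫ t in (0:ℝ)..1, t := by
      rw [← intervalIntegral.integral_const_mul]
      congr 1; funext t; ring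
    rw [h2, integral_id]
    simp
    ring
  have hfin : g 1 - g 0 ≤ ⟪gradient f x, d⟫_ℝ + L / 2 * ‖d‖ ^ 2 := by
    rw [← hint, ← hrhs]; exact hintle
  have h0 : g 0 = f x := by simp [hg]
  have h1 : g 1 = f (x + d) := by simp [hg]
  linarith

set_option maxHeartbeats 1000000 in
theorem stmt12_block (s : ℕ) (n : Fin s → ℕ)
    (f r F : PiLp 2 (fun i : Fin s => EuclideanSpace ℝ (Fin (n i))) → ℝ)
    (L α β : ℝ) (hL : 0 ≤ L) (hα : 0 ≤ α) (hβ : 0 ≤ β)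
    (R : Fin s → ℝ) (hR : ∀ i, 0 < R i)
    (hf : Differentiable ℝ f)
    (hLip : ∀ x y, ‖gradient f x - gradient f y‖ ≤ L * ‖x - y‖)
    (hr : ∀ x y, |r x - r y| ≤ α * ‖x - y‖ + 2 * β)
    (hF : ∀ x, F x = f x + r x)
    (Rmin : ℝ) (hRminpos : 0 < Rmin) (hRminle : ∀ i, Rmin ≤ R i)
    (x : PiLp 2 (fun i : Fin s => EuclideanSpace ℝ (Fin (n i))))
    (hloc : ∀ i : Fin s, ∀ xi ∈ Metric.closedBall (x i) (R i),
      F x ≤ F (WithLp.toLp 2 (Function.update x i xi))) :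
    ‖gradient f x‖ ≤
      Real.sqrt s * (α + max (4 * β / Rmin) (2 * Real.sqrt (β * L))) := by
  set m : ℝ := max (4 * β / Rmin) (2 * Real.sqrt (β * L)) with hm
  have hm0 : 0 ≤ m := le_max_of_le_left (by positivity)
  have hblock : ∀ i : Fin s, ‖gradient f x i‖ ≤ α + m := by
    intro i
    by_contra hcon
    push_neg at hcon
    set G : EuclideanSpace ℝ (Fin (n i)) := gradient f x i with hG
    set gn : ℝ := ‖G‖ with hgn
    have hg0 : 0 < gn := lt_of_le_of_lt (by positivity) hcon
    set c : ℝ := gn - α with hcdef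
    have hc : m < c := by simp only [hcdef]; linarith
    have hc0 : 0 < c := lt_of_le_of_lt hm0 hc
    set h : ℝ := if L = 0 then R i else min (R i) (c / L) with hhdef
    have hLpos : L ≠ 0 → 0 < L := fun hne => lt_of_le_of_ne hL (Ne.symm hne)
    have hh0 : 0 < h := by
      by_cases hL0 : L = 0
      · simp [hhdef, hL0, hR i]
      · simp only [hhdef, hL0, if_false, lt_min_iff]
        exact ⟨hR i, div_pos hc0 (hLpos hL0)⟩
    have hhR : h ≤ R i := by
      by_cases hL0 : L = 0
      · simp [hhdef, hL0]
      · simp only [hhdef, hL0, if_false]; exact min_le_left _ _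
    have hLh : L * h ≤ c := by
      by_cases hL0 : L = 0
      · simp [hL0]; linarith
      · have : h ≤ c / L := by simp only [hhdef, hL0, if_false]; exact min_le_right _ _
        calc L * h ≤ L * (c / L) := by
              exact mul_le_mul_of_nonneg_left this hL
          _ = c := by field_simp
    set v : EuclideanSpace ℝ (Fin (n i)) := -(h / gn) • G with hvdef
    have hvnorm : ‖v‖ = h := by
      rw [hvdef, norm_smul, Real.norm_eq_abs, abs_neg, abs_of_nonneg (by positivity)]
      rw [← hgn]
      field_simp
    set d : PiLp 2 (fun j : Fin s => EuclideanSpace ℝ (Fin (n j))) :=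
      (WithLp.equiv 2 (∀ j, EuclideanSpace ℝ (Fin (n j)))).symm (Pi.single i v) with hddef
    have hupd : WithLp.toLp 2 (Function.update x i (x i + v)) = x + d := by
      refine PiLp.ext fun j => ?_
      rw [PiLp.toLp_apply]
      by_cases hji : j = i
      · subst hji
        rw [Function.update_self]
        show x j + v = x j + (Pi.single j v : ∀ k, EuclideanSpace ℝ (Fin (n k))) j
        rw [Pi.single_eq_same]
      · rw [Function.update_of_ne hji]
        show x j = x j + (Pi.single i v : ∀ k, EuclideanSpace ℝ (Fin (n k))) j
        rw [Pi.single_eq_of_ne hji, add_zero]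
    have hnd : ‖d‖ = h := by
      rw [hddef, WithLp.equiv_symm_apply, PiLp.norm_toLp_single]; exact hvnorm
    have hmem : x i + v ∈ Metric.closedBall (x i) (R i) := by
      rw [Metric.mem_closedBall, dist_eq_norm, add_sub_cancel_left, hvnorm]
      exact hhR
    have h1 := hloc i (x i + v) hmem
    rw [hupd, hF, hF] at h1
    have hrdiff : r (x + d) - r x ≤ α * h + 2 * β := by
      have h2 := hr (x + d) x
      have h3 : ‖(x + d) - x‖ = h := by rw [add_sub_cancel_left, hnd]
      rw [h3] at h2
      exact le_trans (le_abs_self _) h2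
    have hinner : ⟪gradient f x, d⟫_ℝ = -(h * gn) := by
      have h4 : ⟪gradient f x, d⟫_ℝ = ⟪G, v⟫_ℝ := by
        rw [hddef, PiLp.inner_apply, Finset.sum_eq_single i]
        · simp [hG]
        · intro j _ hj; simp [PiLp.toLp_apply, Pi.single_eq_of_ne hj]
        · simp
      rw [h4, hvdef, real_inner_smul_right, real_inner_self_eq_norm_sq, ← hgn]
      field_simp
    have hdesc := stmt12_descent f hf L hLip x d
    rw [hinner, hnd] at hdesc
    have hkey0 : c * h ≤ L / 2 * h ^ 2 + 2 * β := by
      simp only [hcdef]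
      nlinarith [h1, hdesc, hrdiff]
    have hkey : c * h ≤ 4 * β := by
      nlinarith [mul_le_mul_of_nonneg_right hLh hh0.le]
    have hfinal : c ≤ m := by
      by_cases hL0 : L = 0
      · have hhr : h = R i := by simp [hhdef, hL0]
        rw [hhr] at hkey
        have : c ≤ 4 * β / R i := (le_div_iff₀ (hR i)).mpr hkey
        calc c ≤ 4 * β / R i := this
          _ ≤ 4 * β / Rmin := by gcongr; exact hRminle i
          _ ≤ m := le_max_left _ _
      · rcases le_total (R i) (c / L) with hcase | hcase
        · have hhr : h = R i := by
            simp only [hhdef, hL0, if_false]; exact min_eq_left hcase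
          rw [hhr] at hkey
          have : c ≤ 4 * β / R i := (le_div_iff₀ (hR i)).mpr hkey
          calc c ≤ 4 * β / R i := this
            _ ≤ 4 * β / Rmin := by gcongr; exact hRminle i
            _ ≤ m := le_max_left _ _
        · have hhr : h = c / L := by
            simp only [hhdef, hL0, if_false]; exact min_eq_right hcase
          rw [hhr] at hkey
          have hL' := hLpos hL0
          have hc2 : c ^ 2 ≤ 4 * β * L := by
            have : c * (c / L) * L ≤ 4 * β * L :=
              mul_le_mul_of_nonneg_right hkey hL
            calc c ^ 2 = c * (c / L) * L := by field_simp
              _ ≤ 4 * β * L := this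
          have : c ≤ 2 * Real.sqrt (β * L) := by
            have h5 : c = Real.sqrt (c ^ 2) := (Real.sqrt_sq hc0.le).symm
            rw [h5]
            calc Real.sqrt (c ^ 2) ≤ Real.sqrt (4 * β * L) :=
                  Real.sqrt_le_sqrt hc2
              _ = 2 * Real.sqrt (β * L) := by
                  rw [show (4:ℝ) * β * L = 2 ^ 2 * (β * L) by ring,
                    Real.sqrt_mul (by norm_num), Real.sqrt_sq (by norm_num)]
          exact le_trans this (le_max_right _ _)
    exact absurd hfinal (not_le.mpr hc)
  have hsq : ‖gradient f x‖ ^ 2 = ∑ i, ‖gradient f x i‖ ^ 2 :=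
    PiLp.norm_sq_eq_of_L2 _ _
  have hle : ‖gradient f x‖ ^ 2 ≤ s * (α + m) ^ 2 := by
    rw [hsq]
    calc ∑ i, ‖gradient f x i‖ ^ 2 ≤ ∑ _i : Fin s, (α + m) ^ 2 := by
          apply Finset.sum_le_sum
          intro i _
          have := hblock i
          nlinarith [norm_nonneg (gradient f x i)]
      _ = s * (α + m) ^ 2 := by
          rw [Finset.sum_const, Finset.card_univ, Fintype.card_fin, nsmul_eq_mul]
  calc ‖gradient f x‖ = Real.sqrt (‖gradient f x‖ ^ 2) :=
        (Real.sqrt_sq (norm_nonneg _)).symm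
    _ ≤ Real.sqrt (s * (α + m) ^ 2) := Real.sqrt_le_sqrt hle
    _ = Real.sqrt s * (α + m) := by
        rw [Real.sqrt_mul (by positivity), Real.sqrt_sq (by positivity)]

set_option maxHeartbeats 1000000 in
theorem stmt_12 (s : ℕ) (hs : 0 < s) (n : Fin s → ℕ)
    (f r : PiLp 2 (fun i : Fin s => EuclideanSpace ℝ (Fin (n i))) → ℝ)
    (L μ α β M : ℝ) (hL : 0 ≤ L) (hμ : 0 < μ) (hα : 0 ≤ α) (hβ : 0 ≤ β) (hM : 0 ≤ M)
    (R : Fin s → ℝ) (hR : ∀ i, 0 < R i)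
    (hf : Differentiable ℝ f)
    (hLip : ∀ x y, ‖gradient f x - gradient f y‖ ≤ L * ‖x - y‖)
    (χf : Set (PiLp 2 (fun i : Fin s => EuclideanSpace ℝ (Fin (n i)))))
    (hχf : χf = {x | ∀ y, f x ≤ f y}) (hχfne : χf.Nonempty)
    (fstar : ℝ) (hfstar : ∀ x ∈ χf, f x = fstar)
    (hPL : ∀ x, μ * (f x - fstar) ≤ (1 / 2) * ‖gradient f x‖ ^ 2)
    (hgrad : ∀ x, μ * Metric.infDist x χf ≤ ‖gradient f x‖)
    (hdiam : ∀ x ∈ χf, ∀ y ∈ χf, dist x y ≤ M)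
    (hr : ∀ x y, |r x - r y| ≤ α * ‖x - y‖ + 2 * β)
    (F : PiLp 2 (fun i : Fin s => EuclideanSpace ℝ (Fin (n i))) → ℝ)
    (hF : ∀ x, F x = f x + r x)
    (χ : Set (PiLp 2 (fun i : Fin s => EuclideanSpace ℝ (Fin (n i)))))
    (hχ : χ = {x | ∀ y, F x ≤ F y}) (hχne : χ.Nonempty)
    (xbar : PiLp 2 (fun i : Fin s => EuclideanSpace ℝ (Fin (n i))))
    (hmin : ∀ i : Fin s, ∀ xi ∈ Metric.closedBall (xbar i) (R i),
      F xbar ≤ F (WithLp.toLp 2 (Function.update xbar i xi)))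
    (Rmin : ℝ)
    (hRmin : Rmin = Finset.univ.inf'
      (Finset.univ_nonempty_iff.mpr (Fin.pos_iff_nonempty.mp hs)) R) :
    Metric.infDist xbar χ ≤
      2 * Real.sqrt s / μ * (α + max (4 * β / Rmin) (2 * Real.sqrt (β * L))) + M := by
  set m : ℝ := max (4 * β / Rmin) (2 * Real.sqrt (β * L)) with hm
  have hRminle : ∀ i, Rmin ≤ R i := by
    intro i
    rw [hRmin]
    exact Finset.inf'_le _ (Finset.mem_univ i)
  have hRminpos : 0 < Rmin := by
    obtain ⟨j, _, hj⟩ := Finset.exists_mem_eq_inf'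
      (Finset.univ_nonempty_iff.mpr (Fin.pos_iff_nonempty.mp hs)) R
    rw [hRmin, hj]
    exact hR j
  set δ : ℝ := Real.sqrt s * (α + m) with hδ
  have hδ0 : 0 ≤ δ := by
    have hm0 : 0 ≤ m := le_max_of_le_left (by positivity)
    positivity
  have hxb : ‖gradient f xbar‖ ≤ δ :=
    stmt12_block s n f r F L α β hL hα hβ R hR hf hLip hr hF Rmin hRminpos hRminle xbar hmin
  obtain ⟨xs, hxs⟩ := hχne
  have hxsmin : ∀ y, F xs ≤ F y := by rw [hχ] at hxs; exact hxs
  have hx2 : ‖gradient f xs‖ ≤ δ :=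
    stmt12_block s n f r F L α β hL hα hβ R hR hf hLip hr hF Rmin hRminpos hRminle xs
      (fun i xi _ => hxsmin _)
  have hd1 : Metric.infDist xbar χf ≤ δ / μ := by
    rw [le_div_iff₀ hμ]
    calc Metric.infDist xbar χf * μ = μ * Metric.infDist xbar χf := by ring
      _ ≤ ‖gradient f xbar‖ := hgrad xbar
      _ ≤ δ := hxb
  have hd2 : Metric.infDist xs χf ≤ δ / μ := by
    rw [le_div_iff₀ hμ]
    calc Metric.infDist xs χf * μ = μ * Metric.infDist xs χf := by ring
      _ ≤ ‖gradient f xs‖ := hgrad xs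
      _ ≤ δ := hx2
  have key : ∀ ε > (0:ℝ), Metric.infDist xbar χ ≤
      (2 * Real.sqrt s / μ * (α + m) + M) + ε := by
    intro ε hε
    have h1 : Metric.infDist xbar χf < Metric.infDist xbar χf + ε / 2 := by linarith
    obtain ⟨z, hz, hz2⟩ := (Metric.infDist_lt_iff hχfne).mp h1
    have h2 : Metric.infDist xs χf < Metric.infDist xs χf + ε / 2 := by linarith
    obtain ⟨z', hz', hz'2⟩ := (Metric.infDist_lt_iff hχfne).mp h2
    have hzz' : dist z z' ≤ M := hdiam z hz z' hz'
    have hb1 : dist xbar z ≤ δ / μ + ε / 2 := by linarith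
    have hb3 : dist z' xs ≤ δ / μ + ε / 2 := by
      rw [dist_comm]; linarith
    have hfield : 2 * Real.sqrt s / μ * (α + m) = δ / μ + δ / μ := by
      rw [hδ]; field_simp; ring
    calc Metric.infDist xbar χ ≤ dist xbar xs := Metric.infDist_le_dist_of_mem hxs
      _ ≤ dist xbar z + dist z z' + dist z' xs := dist_triangle4 _ _ _ _
      _ ≤ (δ / μ + ε / 2) + M + (δ / μ + ε / 2) := by linarith
      _ = (2 * Real.sqrt s / μ * (α + m) + M) + ε := by rw [hfield]; ring
  exact le_of_forall_pos_le_add key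
end

section
/- Let F = f + r with ∇f L-Lipschitz and |r(x) − r(y)| ≤ α‖x − y‖ + 2β. If x̄ is an R-local minimizer of F up to η ≥ 0, i.e., F(x̄) ≤ min_{x ∈ B(x̄,R)} F(x) + η, then ‖∇f(x̄)‖ ≤ α + max{(4β + 2η)/R, √((4β + 2η)L)}. -/
open RealInnerProductSpace

lemma descent_lemma {n : ℕ} (f : EuclideanSpace ℝ (Fin n) → ℝ) {L : ℝ}
    (hf : Differentiable ℝ f)
    (hLip : ∀ x y, ‖gradient f x - gradient f y‖ ≤ L * ‖x - y‖)
    (x y : EuclideanSpace ℝ (Fin n)) :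
    f y ≤ f x + ⟪gradient f x, y - x⟫ + L / 2 * ‖y - x‖ ^ 2 := by
  set w := y - x with hw
  have hcont : Continuous (gradient f) := by
    refine (LipschitzWith.of_dist_le_mul (K := Real.toNNReal L) (fun a b => ?_)).continuous
    rw [dist_eq_norm, dist_eq_norm]
    refine le_trans (hLip a b) (mul_le_mul_of_nonneg_right ?_ (norm_nonneg _))
    exact Real.le_coe_toNNReal L
  have hline : ∀ t : ℝ, HasDerivAt (fun t : ℝ => x + t • w) w t := fun t => by
    simpa using ((hasDerivAt_id t).smul_const w).const_add x
  have hφ : ∀ t : ℝ, HasDerivAt (fun t : ℝ => f (x + t • w))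
      ⟪gradient f (x + t • w), w⟫ t := by
    intro t
    have hg := (hf (x + t • w)).hasGradientAt
    rw [hasGradientAt_iff_hasFDerivAt] at hg
    simpa [Function.comp_def] using hg.comp_hasDerivAt t (hline t)
  have hderivcont : Continuous fun t : ℝ => ⟪gradient f (x + t • w), w⟫ :=
    continuous_inner.comp ((hcont.comp (continuous_const.add
      (continuous_id.smul continuous_const))).prodMk continuous_const)
  have hint : f (x + (1:ℝ) • w) - f (x + (0:ℝ) • w)
      = ∫ t in (0:ℝ)..1, ⟪gradient f (x + t • w), w⟫ :=
    (intervalIntegral.integral_eq_sub_of_hasDerivAt (fun t _ => hφ t)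
      (hderivcont.intervalIntegrable 0 1)).symm
  have hc2 : Continuous fun t : ℝ => ⟪gradient f x, w⟫ + L * ‖w‖ ^ 2 * t := by fun_prop
  have hbound : ∫ t in (0:ℝ)..1, ⟪gradient f (x + t • w), w⟫
      ≤ ∫ t in (0:ℝ)..1, (⟪gradient f x, w⟫ + L * ‖w‖ ^ 2 * t) := by
    apply intervalIntegral.integral_mono_on (by norm_num)
      (hderivcont.intervalIntegrable 0 1) (hc2.intervalIntegrable 0 1)
    intro t ht
    have h1 : ⟪gradient f (x + t • w), w⟫ - ⟪gradient f x, w⟫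
        = ⟪gradient f (x + t • w) - gradient f x, w⟫ := by rw [inner_sub_left]
    have h2 : ⟪gradient f (x + t • w) - gradient f x, w⟫
        ≤ ‖gradient f (x + t • w) - gradient f x‖ * ‖w‖ := real_inner_le_norm _ _
    have h3 : ‖gradient f (x + t • w) - gradient f x‖ ≤ L * ‖t • w‖ := by
      simpa using hLip (x + t • w) x
    have h4 : ‖t • w‖ = t * ‖w‖ := by
      rw [norm_smul, Real.norm_eq_abs, abs_of_nonneg ht.1]
    have h5 : L * ‖t • w‖ * ‖w‖ = L * ‖w‖ ^ 2 * t := by rw [h4]; ring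
    linarith [h1, h2, h5 ▸ mul_le_mul_of_nonneg_right h3 (norm_nonneg w)]
  have hval : ∫ t in (0:ℝ)..1, (⟪gradient f x, w⟫ + L * ‖w‖ ^ 2 * t)
      = ⟪gradient f x, w⟫ + L / 2 * ‖w‖ ^ 2 := by
    have hib : IntervalIntegrable (fun t : ℝ => L * ‖w‖ ^ 2 * t)
        MeasureTheory.volume 0 1 := Continuous.intervalIntegrable (by fun_prop) 0 1
    rw [intervalIntegral.integral_add intervalIntegrable_const hib,
      intervalIntegral.integral_const_mul]
    simp [integral_id]
    ring
  have h1 : f y = f (x + (1:ℝ) • w) := by simp [hw]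
  have h0 : f (x + (0:ℝ) • w) = f x := by simp
  rw [h1]
  linarith [hint, hbound, hval ▸ hbound]

theorem stmt_13 (n : ℕ) (f r : EuclideanSpace ℝ (Fin n) → ℝ)
    (L α β R η : ℝ) (hL : 0 ≤ L) (hα : 0 ≤ α) (hβ : 0 ≤ β) (hR : 0 < R) (hη : 0 ≤ η)
    (hf : Differentiable ℝ f)
    (hLip : ∀ x y, ‖gradient f x - gradient f y‖ ≤ L * ‖x - y‖)
    (hr : ∀ x y, |r x - r y| ≤ α * ‖x - y‖ + 2 * β)
    (F : EuclideanSpace ℝ (Fin n) → ℝ) (hF : ∀ x, F x = f x + r x)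
    (xbar : EuclideanSpace ℝ (Fin n))
    (hmin : ∀ x ∈ Metric.closedBall xbar R, F xbar ≤ F x + η) :
    ‖gradient f xbar‖ ≤
      α + max ((4 * β + 2 * η) / R) (Real.sqrt ((4 * β + 2 * η) * L)) := by
  set v := gradient f xbar with hv
  set c : ℝ := 2 * β + η with hc
  clear_value v c
  have hc0 : 0 ≤ c := by rw [hc]; linarith
  have hgoal : 4 * β + 2 * η = 2 * c := by rw [hc]; ring
  rw [hgoal]
  have hM0 : 0 ≤ max (2 * c / R) (Real.sqrt (2 * c * L)) :=
    le_max_of_le_right (Real.sqrt_nonneg _)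
  by_cases hv0 : v = 0
  · rw [hv0, norm_zero]; linarith
  have hvpos : 0 < ‖v‖ := norm_pos_iff.mpr hv0
  have key : ∀ t : ℝ, 0 < t → t ≤ R → ‖v‖ ≤ α + L * t / 2 + c / t := by
    intro t ht htR
    set x := xbar - (t / ‖v‖) • v with hx
    have hdiff : x - xbar = -((t / ‖v‖) • v) := by rw [hx]; abel
    have hnorm : ‖x - xbar‖ = t := by
      rw [hdiff, norm_neg, norm_smul, Real.norm_eq_abs,
        abs_of_nonneg (div_nonneg ht.le hvpos.le), div_mul_cancel₀ _ hvpos.ne']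
    have hball : x ∈ Metric.closedBall xbar R := by
      rw [Metric.mem_closedBall, dist_eq_norm, hnorm]; exact htR
    have h1 := hmin x hball
    rw [hF, hF] at h1
    have h2 := descent_lemma f hf hLip xbar x
    have hinner : ⟪v, x - xbar⟫ = -(t * ‖v‖) := by
      rw [hdiff, inner_neg_right, real_inner_smul_right, real_inner_self_eq_norm_sq]
      field_simp
    rw [← hv, hinner, hnorm] at h2
    have h3 := hr x xbar
    rw [hnorm] at h3
    have h3' : r x - r xbar ≤ α * t + 2 * β := (abs_le.mp h3).2
    have hmain : t * ‖v‖ ≤ L / 2 * t ^ 2 + α * t + c := by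
      rw [hc]; nlinarith [h1, h2, h3']
    have hct : c / t * t = c := div_mul_cancel₀ c ht.ne'
    have hfin : ‖v‖ * t ≤ (α + L * t / 2 + c / t) * t := by nlinarith [hmain, hct]
    exact le_of_mul_le_mul_right hfin ht
  rcases eq_or_lt_of_le hc0 with hceq | hcpos
  · -- c = 0
    have hva : ‖v‖ ≤ α := by
      by_contra hcon
      push_neg at hcon
      set ε := ‖v‖ - α with hε
      have hεpos : 0 < ε := by rw [hε]; linarith
      have hL1 : (0:ℝ) < L + 1 := by linarith
      set t := min R (ε / (L + 1)) with htdef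
      have ht : 0 < t := lt_min hR (by positivity)
      have hk := key t ht (min_le_left _ _)
      rw [← hceq] at hk
      have htle : t ≤ ε / (L + 1) := min_le_right _ _
      have htle' : t * (L + 1) ≤ ε := by
        rw [← le_div_iff₀ hL1]; exact htle
      have hLt : L * t ≤ ε := by nlinarith [ht.le]
      simp only [zero_div, add_zero] at hk
      have : ‖v‖ < ‖v‖ := by
        calc ‖v‖ ≤ α + L * t / 2 := hk
          _ < α + ε := by linarith
          _ = ‖v‖ := by rw [hε]; ring
      exact lt_irrefl _ this
    linarith
  · rcases eq_or_lt_of_le hL with hLeq | hLpos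
    · -- L = 0
      have hk := key R hR le_rfl
      have h2cR : c / R ≤ 2 * c / R := by
        gcongr
        linarith
      calc ‖v‖ ≤ α + L * R / 2 + c / R := hk
        _ = α + c / R := by rw [← hLeq]; ring
        _ ≤ α + 2 * c / R := by linarith
        _ ≤ α + max (2 * c / R) (Real.sqrt (2 * c * L)) := by
            have := le_max_left (2 * c / R) (Real.sqrt (2 * c * L)); linarith
    · -- L > 0
      set t0 := Real.sqrt (2 * c / L) with ht0def
      set s := Real.sqrt (2 * c * L) with hsdef
      clear_value t0 s
      have ht0pos : 0 < t0 := ht0def ▸ Real.sqrt_pos.mpr (by positivity)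
      have ht0sq : t0 ^ 2 = 2 * c / L := by
        rw [ht0def]; exact Real.sq_sqrt (by positivity)
      have hssq : s ^ 2 = 2 * c * L := by
        rw [hsdef]; exact Real.sq_sqrt (by positivity)
      have hs0 : 0 ≤ s := hsdef ▸ Real.sqrt_nonneg _
      have hst : s * t0 = 2 * c := by
        rw [hsdef, ht0def, ← Real.sqrt_mul (by positivity)]
        rw [show 2 * c * L * (2 * c / L) = (2 * c) ^ 2 by
          field_simp]
        exact Real.sqrt_sq (by linarith)
      rcases le_or_gt t0 R with hcase | hcase
      · have hk := key t0 ht0pos hcase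
        have hexp : (L * t0 / 2 + c / t0) * t0 = L * t0 ^ 2 / 2 + c := by
          field_simp
        have h2 : L * t0 ^ 2 / 2 + c = 2 * c := by
          rw [ht0sq]; field_simp; ring
        have heq : L * t0 / 2 + c / t0 = s := by
          apply mul_right_cancel₀ ht0pos.ne'
          rw [hexp, h2, hst]
        calc ‖v‖ ≤ α + L * t0 / 2 + c / t0 := hk
          _ = α + s := by rw [← heq]; ring
          _ ≤ α + max (2 * c / R) s := by
              have := le_max_right (2 * c / R) s; linarith
      · have hk := key R hR le_rfl
        have hRt : R ^ 2 < t0 ^ 2 := by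
          rw [pow_two, pow_two]; exact mul_self_lt_mul_self hR.le hcase
        rw [ht0sq, lt_div_iff₀ hLpos] at hRt
        have hLR : L * R ^ 2 < 2 * c := by
          calc L * R ^ 2 = R ^ 2 * L := by ring
            _ < 2 * c := hRt
        have hstep : L * R / 2 + c / R ≤ 2 * c / R := by
          have e1 : c / R * R = c := div_mul_cancel₀ c hR.ne'
          have e2 : 2 * c / R * R = 2 * c := div_mul_cancel₀ _ hR.ne'
          have hmul : (L * R / 2 + c / R) * R ≤ (2 * c / R) * R := by
            have hex : (L * R / 2 + c / R) * R = L * R ^ 2 / 2 + c := by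
              field_simp
            rw [hex, e2]; linarith
          exact le_of_mul_le_mul_right hmul hR
        calc ‖v‖ ≤ α + L * R / 2 + c / R := hk
          _ ≤ α + 2 * c / R := by linarith
          _ ≤ α + max (2 * c / R) s := by
              have := le_max_left (2 * c / R) s; linarith
end

section
/- Let g : [0, R] → ℝ be the quadratic g(t) = 2β + (α − c)t + (L/2)t², where c = ‖∇f(x̄)‖ > α, β ≥ 0, L > 0. If g(t) ≥ 0 for all t ∈ [0, R], then c ≤ α + max{4β/R, 2√(βL)}. -/
theorem stmt_16 (α β L R c : ℝ) (hβ : 0 ≤ β) (hL : 0 < L) (hR : 0 < R)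
    (hc : α < c)
    (g : ℝ → ℝ) (hg : ∀ t, g t = 2 * β + (α - c) * t + L / 2 * t ^ 2)
    (hpos : ∀ t ∈ Set.Icc (0 : ℝ) R, 0 ≤ g t) :
    c ≤ α + max (4 * β / R) (2 * Real.sqrt (β * L)) := by
  rcases le_or_gt R ((c - α) / L) with h | h
  · have hgR := hpos R ⟨hR.le, le_refl R⟩
    rw [hg] at hgR
    have hLR : R * L ≤ c - α := by
      rw [le_div_iff₀ hL] at h; linarith
    have : c - α ≤ 4 * β / R := by
      rw [le_div_iff₀ hR]; nlinarith
    calc c ≤ α + 4 * β / R := by linarith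
      _ ≤ _ := by gcongr; exact le_max_left _ _
  · set t := (c - α) / L with ht
    have ht0 : 0 < t := div_pos (by linarith) hL
    have hgt := hpos t ⟨ht0.le, h.le⟩
    rw [hg] at hgt
    have hkey : (c - α) ^ 2 ≤ 4 * (β * L) := by
      rw [ht] at hgt
      field_simp at hgt
      nlinarith [hgt, mul_pos hL hL]
    have : c - α ≤ 2 * Real.sqrt (β * L) := by
      have h1 := Real.sqrt_le_sqrt hkey
      rw [Real.sqrt_sq (by linarith),
        show (4:ℝ) * (β * L) = (2 * Real.sqrt (β * L)) ^ 2 by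
          rw [mul_pow, Real.sq_sqrt (by positivity)]; ring,
        Real.sqrt_sq (by positivity)] at h1
      exact h1
    calc c ≤ α + 2 * Real.sqrt (β * L) := by linarith
      _ ≤ _ := by gcongr; exact le_max_right _ _
end
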